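/- arXiv:2103.12911 — 3 statements merged into one kernel-verified Lean document; each statement's English description precedes it below -/
import Mathlib

section
/- Suppose each utility f_i is concave on ℝ≥0. If x° is a social welfare equilibrium (a maximizer of ∑ f_i(x_i) subject to x_i ≥ 0 and ∑ x_i = ∑ a_i), then there exists λ* ∈ ℝ such that (λ*, x°) is a competitive equilibrium, i.e., each x_i° maximizes x ↦ f_i(x) + λ*(a_i - x) over x ≥ 0. -/
-- chord slope lemma for concave functions
lemma conc_chord {g : ℝ → ℝ} (hf : ConcaveOn ℝ (Set.Ici (0:ℝ)) g)
    {x y z : ℝ} (hx : 0 ≤ x) (hxy : x < y) (hyz : y < z) :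
    (g z - g y)/(z - y) ≤ (g z - g x)/(z - x) ∧
    (g z - g x)/(z - x) ≤ (g y - g x)/(y - x) := by
  have hz : (0:ℝ) ≤ z := le_of_lt (lt_of_le_of_lt hx (hxy.trans hyz))
  have h := hf.slope_anti_adjacent (Set.mem_Ici.2 hx) (Set.mem_Ici.2 hz) hxy hyz
  have h1 : 0 < y - x := by linarith
  have h2 : 0 < z - y := by linarith
  have h3 : 0 < z - x := by linarith
  rw [div_le_div_iff₀ h2 h1] at h
  constructor
  · rw [div_le_div_iff₀ h2 h3]; nlinarith
  · rw [div_le_div_iff₀ h3 h1]; nlinarith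

-- exchange lemma: shifting t from coordinate j to coordinate i keeps feasibility
lemma exchange_ineq (n : ℕ) (a : Fin n → ℝ) (f : Fin n → ℝ → ℝ)
    (xo : Fin n → ℝ)
    (hpos : ∀ i, 0 ≤ xo i)
    (hbal : ∑ i, xo i = ∑ i, a i)
    (hopt : ∀ x : Fin n → ℝ, (∀ i, 0 ≤ x i) → (∑ i, x i = ∑ i, a i) →
      ∑ i, f i (x i) ≤ ∑ i, f i (xo i))
    {i j : Fin n} (hij : i ≠ j) {t : ℝ} (ht : 0 < t) (htj : t ≤ xo j) :
    f i (xo i + t) + f j (xo j - t) ≤ f i (xo i) + f j (xo j) := by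
  set x : Fin n → ℝ := Function.update (Function.update xo i (xo i + t)) j (xo j - t) with hx
  have hxj : x j = xo j - t := by simp [hx]
  have hxi : x i = xo i + t := by simp [hx, Function.update_of_ne hij]
  have hxk : ∀ k, k ≠ i → k ≠ j → x k = xo k := by
    intro k hki hkj
    simp [hx, Function.update_of_ne hkj, Function.update_of_ne hki]
  have hxpos : ∀ k, 0 ≤ x k := by
    intro k
    rcases eq_or_ne k i with rfl | hki
    · rw [hxi]; have := hpos k; linarith
    rcases eq_or_ne k j with rfl | hkj
    · rw [hxj]; linarith
    · rw [hxk k hki hkj]; exact hpos k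
  have key : ∀ g : Fin n → ℝ → ℝ, ∑ k, g k (x k) =
      (∑ k, g k (xo k)) - g i (xo i) - g j (xo j) + g i (xo i + t) + g j (xo j - t) := by
    intro g
    have hx' : ∀ k, g k (x k) =
        Function.update (Function.update (fun k => g k (xo k)) i (g i (xo i + t))) j
          (g j (xo j - t)) k := by
      intro k
      rcases eq_or_ne k i with rfl | hki
      · rw [hxi, Function.update_of_ne hij, Function.update_self]
      rcases eq_or_ne k j with rfl | hkj
      · rw [hxj, Function.update_self]
      · rw [hxk k hki hkj, Function.update_of_ne hkj, Function.update_of_ne hki]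
    rw [Finset.sum_congr rfl (fun k _ => hx' k)]
    rw [Finset.sum_update_of_mem (Finset.mem_univ j),
        Finset.sum_update_of_mem (by simp [hij] : i ∈ Finset.univ \ {j})]
    rw [Finset.sum_sdiff_eq_sub (by simp [hij] : ({i}:Finset (Fin n)) ⊆ Finset.univ \ {j})]
    rw [Finset.sum_sdiff_eq_sub (by simp : ({j}:Finset (Fin n)) ⊆ Finset.univ)]
    simp
    ring
  have hsum : ∑ k, x k = ∑ k, a k := by
    have := key (fun _ v => v)
    rw [this, ← hbal]; ring
  have := hopt x hxpos hsum
  rw [key f] at this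
  linarith

/-- a social welfare equilibrium yields a competitive equilibrium price. -/
theorem social_welfare_implies_competitive
    (n : ℕ) (a : Fin n → ℝ) (f : Fin n → ℝ → ℝ)
    (ha : ∀ i, 0 ≤ a i) (hapos : 0 < ∑ i, a i)
    (hconc : ∀ i, ConcaveOn ℝ (Set.Ici (0 : ℝ)) (f i))
    (xo : Fin n → ℝ)
    (hpos : ∀ i, 0 ≤ xo i)
    (hbal : ∑ i, xo i = ∑ i, a i)
    (hopt : ∀ x : Fin n → ℝ, (∀ i, 0 ≤ x i) → (∑ i, x i = ∑ i, a i) →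
      ∑ i, f i (x i) ≤ ∑ i, f i (xo i)) :
    ∃ lam : ℝ, ∀ i, ∀ x : ℝ, 0 ≤ x →
      f i x + lam * (a i - x) ≤ f i (xo i) + lam * (a i - xo i) := by
  classical
  set L : Set ℝ :=
    { l | ∃ j : Fin n, ∃ s : ℝ, 0 < s ∧ s ≤ xo j ∧ l = (f j (xo j) - f j (xo j - s)) / s }
    with hLdef
  -- every right slope is a lower bound of L
  have key : ∀ (i : Fin n) (t : ℝ), 0 < t → ∀ l ∈ L,
      (f i (xo i + t) - f i (xo i)) / t ≤ l := by
    rintro i t ht l ⟨j, s, hs, hsj, rfl⟩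
    set u := min t s with hu
    have hu0 : 0 < u := lt_min ht hs
    have huj : u ≤ xo j := (min_le_right t s).trans hsj
    -- Step A : slope over [xo i, xo i + t] ≤ slope over [xo i, xo i + u]
    have stepA : (f i (xo i + t) - f i (xo i)) / t ≤
        (f i (xo i + u) - f i (xo i)) / u := by
      rcases eq_or_lt_of_le (min_le_left t s : u ≤ t) with h | h
      · rw [show u = t from h]
      · have := (conc_chord (hconc i) (hpos i)
          (by linarith : xo i < xo i + u) (by linarith : xo i + u < xo i + t)).2
        have e1 : xo i + t - xo i = t := by ring
        have e2 : xo i + u - xo i = u := by ring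
        rw [e1, e2] at this
        exact this
    -- Step C : slope over [xo j - u, xo j] ≤ slope over [xo j - s, xo j]
    have stepC : (f j (xo j) - f j (xo j - u)) / u ≤
        (f j (xo j) - f j (xo j - s)) / s := by
      rcases eq_or_lt_of_le (min_le_right t s : u ≤ s) with h | h
      · rw [show u = s from h]
      · have := (conc_chord (hconc j) (by linarith : (0:ℝ) ≤ xo j - s)
          (by linarith : xo j - s < xo j - u) (by linarith : xo j - u < xo j)).1
        have e1 : xo j - (xo j - u) = u := by ring
        have e2 : xo j - (xo j - s) = s := by ring
        rw [e1, e2] at this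
        exact this
    -- Step B : right slope at i over u ≤ left slope at j over u
    have stepB : (f i (xo i + u) - f i (xo i)) / u ≤
        (f j (xo j) - f j (xo j - u)) / u := by
      rcases eq_or_ne i j with rfl | hij
      · have := (hconc i).slope_anti_adjacent
          (Set.mem_Ici.2 (by linarith : (0:ℝ) ≤ xo i - u))
          (Set.mem_Ici.2 (by have := hpos i; linarith : (0:ℝ) ≤ xo i + u))
          (by linarith : xo i - u < xo i) (by linarith : xo i < xo i + u)
        have e1 : xo i + u - xo i = u := by ring
        have e2 : xo i - (xo i - u) = u := by ring
        rw [e1, e2] at this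
        exact this
      · have hex := exchange_ineq n a f xo hpos hbal hopt hij hu0 huj
        rw [div_le_div_iff₀ hu0 hu0]
        nlinarith
    linarith
  -- L is nonempty
  obtain ⟨j0, hj0⟩ : ∃ j : Fin n, 0 < xo j := by
    by_contra h
    push_neg at h
    have : ∑ i, xo i ≤ 0 := Finset.sum_nonpos (fun i _ => h i)
    rw [hbal] at this; linarith
  have hLne : L.Nonempty :=
    ⟨(f j0 (xo j0) - f j0 (xo j0 - xo j0)) / xo j0, j0, xo j0, hj0, le_refl _, rfl⟩
  have hLbdd : BddBelow L :=
    ⟨(f j0 (xo j0 + 1) - f j0 (xo j0)) / 1, fun l hl => key j0 1 one_pos l hl⟩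
  refine ⟨sInf L, fun i x hx => ?_⟩
  have main : f i x - f i (xo i) ≤ sInf L * (x - xo i) := by
    rcases lt_trichotomy x (xo i) with h | h | h
    · -- x < xo i : use membership in L with s = xo i - x
      have hmem : (f i (xo i) - f i (xo i - (xo i - x))) / (xo i - x) ∈ L :=
        ⟨i, xo i - x, by linarith, by linarith, rfl⟩
      have hle := csInf_le hLbdd hmem
      have e : xo i - (xo i - x) = x := by ring
      rw [e] at hle
      rw [le_div_iff₀ (by linarith : (0:ℝ) < xo i - x)] at hle
      nlinarith
    · rw [h]; ring_nf; simp
    · -- x > xo i : right slope lower bound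
      have hr := le_csInf hLne (key i (x - xo i) (by linarith))
      have e : xo i + (x - xo i) = x := by ring
      rw [e, div_le_iff₀ (by linarith : (0:ℝ) < x - xo i)] at hr
      linarith
  nlinarith [main]
end

section
/- In the trading model, if (λ*, x*, e*) is a competitive equilibrium (each pair (x_i*, e_i*) maximizes f_i(x_i) + λ* e_i subject to x_i + e_i ≤ a_i, x_i ≥ 0, e_i ∈ ℝ, and ∑ e_i* = 0), then (x*, e*) is a social welfare equilibrium, i.e., it maximizes ∑ f_i(x_i) subject to ∑ e_i = 0, x_i + e_i ≤ a_i, x_i ≥ 0. -/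
/-- trading model: a competitive equilibrium is a social welfare equilibrium. -/
theorem trading_competitive_implies_social_welfare
    (n : ℕ) (a : Fin n → ℝ) (f : Fin n → ℝ → ℝ)
    (lam : ℝ) (xstar estar : Fin n → ℝ)
    (hfeas : ∀ i, 0 ≤ xstar i ∧ xstar i + estar i ≤ a i)
    (hmax : ∀ i, ∀ x e : ℝ, 0 ≤ x → x + e ≤ a i →
      f i x + lam * e ≤ f i (xstar i) + lam * estar i)
    (hbal : ∑ i, estar i = 0) :
    ∀ x e : Fin n → ℝ, (∀ i, 0 ≤ x i) → (∀ i, x i + e i ≤ a i) →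
      (∑ i, e i = 0) → ∑ i, f i (x i) ≤ ∑ i, f i (xstar i) := by
  intro x e hx hxe hb
  have h : ∑ i, (f i (x i) + lam * e i) ≤ ∑ i, (f i (xstar i) + lam * estar i) :=
    Finset.sum_le_sum fun i _ => hmax i (x i) (e i) (hx i) (hxe i)
  simp [Finset.sum_add_distrib, ← Finset.mul_sum, hb, hbal] at h
  exact h
end

section
/- Let b_min, b_max, k_min, k_max > 0 with b_min ≤ b_max and k_min ≤ k_max, and let C > 0. Suppose n·k_min/b_max ≥ C, −n·k_min/b_max + n·k_max/b_min ≤ C, and −n·λ†/b_max + n·k_max/b_min ≤ C for some λ† > 0. Then for all parameters k_i ∈ [k_min, k_max] and b_i ∈ [b_min, b_max] (i = 1,...,n), the value λ* = (∑_i k_i/b_i − C)/(∑_i 1/b_i) satisfies 0 ≤ λ* ≤ λ† and λ* ≤ k_i for all i. -/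
/-- social shaping: admissible parameter bounds guarantee a
socially resilient equilibrium price. -/
theorem social_shaping_price_bounds
    (n : ℕ) (bmin bmax kmin kmax : ℝ)
    (hbmin : 0 < bmin) (hbmax : 0 < bmax) (hkmin : 0 < kmin) (hkmax : 0 < kmax)
    (hb : bmin ≤ bmax) (hk : kmin ≤ kmax)
    (C : ℝ) (hC : 0 < C) (lamdag : ℝ) (hlamdag : 0 < lamdag)
    (h1 : C ≤ n * kmin / bmax)
    (h2 : -(n * kmin / bmax) + n * kmax / bmin ≤ C)
    (h3 : -(n * lamdag / bmax) + n * kmax / bmin ≤ C)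
    (k b : Fin n → ℝ)
    (hki : ∀ i, k i ∈ Set.Icc kmin kmax) (hbi : ∀ i, b i ∈ Set.Icc bmin bmax) :
    0 ≤ (∑ i, k i / b i - C) / (∑ i, 1 / b i) ∧
    (∑ i, k i / b i - C) / (∑ i, 1 / b i) ≤ lamdag ∧
    ∀ i, (∑ j, k j / b j - C) / (∑ j, 1 / b j) ≤ k i := by
  have hbpos : ∀ i, 0 < b i := fun i => lt_of_lt_of_le hbmin (hbi i).1
  have hn : (0:ℝ) < n := by
    rcases Nat.eq_zero_or_pos n with h | h
    · subst h; norm_num at h1; linarith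
    · exact_mod_cast h
  have hS1 : (n : ℝ) / bmax ≤ ∑ i, 1 / b i := by
    calc (n:ℝ)/bmax = ∑ _i : Fin n, 1/bmax := by
          simp [Finset.sum_const]; ring
      _ ≤ ∑ i, 1 / b i :=
          Finset.sum_le_sum fun i _ => one_div_le_one_div_of_le (hbpos i) (hbi i).2
  have hSpos : 0 < ∑ i, 1/b i := lt_of_lt_of_le (div_pos hn hbmax) hS1
  have hTlo : (n:ℝ) * kmin / bmax ≤ ∑ i, k i / b i := by
    calc (n:ℝ) * kmin / bmax = ∑ _i : Fin n, kmin/bmax := by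
          simp [Finset.sum_const]; ring
      _ ≤ ∑ i, k i / b i :=
          Finset.sum_le_sum fun i _ =>
            div_le_div₀ (le_trans hkmin.le (hki i).1) (hki i).1 (hbpos i) (hbi i).2
  have hThi : ∑ i, k i / b i ≤ (n:ℝ) * kmax / bmin := by
    calc ∑ i, k i / b i ≤ ∑ _i : Fin n, kmax/bmin :=
          Finset.sum_le_sum fun i _ =>
            div_le_div₀ hkmax.le (hki i).2 hbmin (hbi i).1
      _ = (n:ℝ) * kmax / bmin := by simp [Finset.sum_const]; ring
  refine ⟨div_nonneg (by linarith) hSpos.le, ?_, ?_⟩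
  · rw [div_le_iff₀ hSpos]
    have h4 : lamdag * ((n:ℝ)/bmax) ≤ lamdag * ∑ i, 1/b i :=
      mul_le_mul_of_nonneg_left hS1 hlamdag.le
    have h5 : (n:ℝ)*lamdag/bmax = lamdag * ((n:ℝ)/bmax) := by ring
    linarith
  · intro i
    rw [div_le_iff₀ hSpos]
    have h4 : kmin * ((n:ℝ)/bmax) ≤ k i * ∑ j, 1/b j :=
      mul_le_mul (hki i).1 hS1 (div_pos hn hbmax).le (le_trans hkmin.le (hki i).1)
    have h5 : (n:ℝ)*kmin/bmax = kmin * ((n:ℝ)/bmax) := by ring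
    linarith
end
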